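/- Let α be a nonzero integer, 0 < β < α, and f : [0,∞) → ℂ continuous with ‖f‖_β = sup_{z≥0} |f(z)|e^{βz} < ∞. Define φ(z) = -(1/(2α)) ∫_0^∞ (e^{-α|x-z|} - e^{-α(x+z)}) f(x) dx (with α replaced by |α|). Then φ solves φ'' - α²φ = f on (0,∞) with φ(0) = 0, and there is a constant C independent of α such that α²‖φ‖_β + |α|·‖φ'‖_β + ‖φ''‖_β ≤ C ‖f‖_β. -/

import Mathlib

open scoped ENNReal
open MeasureTheory

/-- The weighted sup-norm `‖g‖_β = sup_{z ≥ 0} |g(z)| e^{βz}` (valued in `ℝ≥0∞`). -/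
noncomputable def expNorm (β : ℝ) (g : ℝ → ℂ) : ℝ≥0∞ :=
  ⨆ z ∈ Set.Ici (0 : ℝ), ENNReal.ofReal (‖g z‖ * Real.exp (β * z))

section LIAproofaux
open Real MeasureTheory Set intervalIntegral Filter Topology

lemma int_exp_Ioi {c : ℝ} (hc : 0 < c) (z : ℝ) :
    ∫ x in Ioi z, Real.exp (-(c*x)) = Real.exp (-(c*z)) / c := by
  have h := integral_Ioi_of_hasDerivAt_of_tendsto (f := fun x => -Real.exp (-(c*x)) / c)
    (f' := fun x => Real.exp (-(c*x))) (a := z) (m := 0) ?_ ?_ ?_ ?_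
  · rw [h]; ring
  · exact (Continuous.continuousWithinAt (by continuity))
  · intro x _
    have : HasDerivAt (fun x => -Real.exp (-(c*x)) / c) (-(Real.exp (-(c*x)) * -(c*1)) / c) x :=
      (((hasDerivAt_id x).const_mul c).neg.exp.neg.div_const c)
    exact this.congr_deriv (by rw [mul_one, mul_neg, neg_neg, mul_div_assoc, div_self hc.ne', mul_one])
  · simpa using (exp_neg_integrableOn_Ioi z hc).congr_fun (fun x _ => by ring_nf) measurableSet_Ioi
  · have : Filter.Tendsto (fun x => -Real.exp (-(c*x)) / c) atTop (𝓝 (-0 / c)) := by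
      refine Filter.Tendsto.div_const (Filter.Tendsto.neg ?_) _
      exact tendsto_exp_atBot.comp (by simpa [neg_mul] using tendsto_id.const_mul_atTop_of_neg (neg_neg_iff_pos.2 hc))
    simpa using this

lemma int_exp_interval (c : ℝ) (hc : c ≠ 0) (z : ℝ) :
    ∫ x in (0:ℝ)..z, Real.exp (c*x) = (Real.exp (c*z) - 1) / c := by
  have h : ∀ x ∈ Set.uIcc (0:ℝ) z, HasDerivAt (fun x => Real.exp (c*x) / c) (Real.exp (c*x)) x := by
    intro x _
    have : HasDerivAt (fun x => Real.exp (c*x) / c) (Real.exp (c*x) * (c*1) / c) x :=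
      (((hasDerivAt_id x).const_mul c).exp.div_const c)
    convert this using 1; field_simp
  rw [intervalIntegral.integral_eq_sub_of_hasDerivAt h (by apply Continuous.intervalIntegrable; continuity)]
  simp [sub_div]

open Real MeasureTheory Set Filter Topology intervalIntegral

noncomputable section LIAaux
namespace LIA

variable (a : ℝ) (f : ℝ → ℂ)

def K : ℂ := ∫ x in Ioi (0:ℝ), Real.exp (-a * x) • f x
def F (z : ℝ) : ℂ := ∫ x in (0:ℝ)..z, Real.exp (a * x) • f x
def G (z : ℝ) : ℂ := K a f - ∫ x in (0:ℝ)..z, Real.exp (-a * x) • f x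

variable {β M : ℝ} {a} {f}

section basic
variable (hcf : Continuous f)
  (hb : ∀ x, 0 ≤ x → ‖f x‖ ≤ M * Real.exp (-β * x))
  (hβ0 : 0 < β) (ha : 0 < a)

include hcf hb hβ0 ha

lemma intK : IntegrableOn (fun x => Real.exp (-a * x) • f x) (Ioi (0:ℝ)) := by
  refine Integrable.mono' (g := fun x => M * Real.exp (-(a+β) * x)) ?_ ?_ ?_
  · exact (exp_neg_integrableOn_Ioi 0 (by positivity)).const_mul M
  · exact ((by fun_prop : Continuous (fun x => Real.exp (-a * x) • f x)).aestronglyMeasurable).restrict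
  · filter_upwards [ae_restrict_mem measurableSet_Ioi] with x hx
    have hx0 : (0:ℝ) ≤ x := le_of_lt hx
    have : ‖Real.exp (-a * x) • f x‖ = Real.exp (-a * x) * ‖f x‖ := by
      rw [norm_smul, Real.norm_eq_abs, abs_of_pos (Real.exp_pos _)]
    rw [this]
    calc Real.exp (-a * x) * ‖f x‖
        ≤ Real.exp (-a * x) * (M * Real.exp (-β * x)) := by
          exact mul_le_mul_of_nonneg_left (hb x hx0) (Real.exp_pos _).le
      _ = M * Real.exp (-(a+β) * x) := by rw [mul_comm, mul_assoc, ← Real.exp_add]; ring_nf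

lemma intKz {z : ℝ} (hz : 0 ≤ z) :
    IntegrableOn (fun x => Real.exp (-a * x) • f x) (Ioi z) :=
  (intK hcf hb hβ0 ha).mono_set (Ioi_subset_Ioi hz)

lemma intKer (z : ℝ) :
    IntegrableOn (fun x => Real.exp (-a * |x - z|) • f x) (Ioi (0:ℝ)) := by
  refine Integrable.mono' (g := fun x => (Real.exp (a*z) * M) * Real.exp (-(a+β) * x)) ?_ ?_ ?_
  · exact (exp_neg_integrableOn_Ioi 0 (by positivity)).const_mul _
  · exact ((by fun_prop : Continuous (fun x => Real.exp (-a * |x - z|) • f x)).aestronglyMeasurable).restrict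
  · filter_upwards [ae_restrict_mem measurableSet_Ioi] with x hx
    have hx0 : (0:ℝ) ≤ x := le_of_lt hx
    have h1 : Real.exp (-a * |x - z|) ≤ Real.exp (a*z) * Real.exp (-a * x) := by
      rw [← Real.exp_add]
      apply Real.exp_le_exp.2
      have : x - z ≤ |x - z| := le_abs_self _
      nlinarith [ha.le]
    have : ‖Real.exp (-a * |x-z|) • f x‖ = Real.exp (-a * |x-z|) * ‖f x‖ := by
      rw [norm_smul, Real.norm_eq_abs, abs_of_pos (Real.exp_pos _)]
    rw [this]
    calc Real.exp (-a * |x-z|) * ‖f x‖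
        ≤ (Real.exp (a*z) * Real.exp (-a * x)) * (M * Real.exp (-β * x)) :=
          mul_le_mul h1 (hb x hx0) (norm_nonneg _) (by positivity)
      _ = (Real.exp (a*z) * M) * Real.exp (-(a+β) * x) := by
          rw [show (Real.exp (a*z) * Real.exp (-a * x)) * (M * Real.exp (-β * x))
              = (Real.exp (a*z) * M) * (Real.exp (-a*x) * Real.exp (-β * x)) by ring,
            ← Real.exp_add]
          ring_nf

lemma intKer2 (z : ℝ) :
    IntegrableOn (fun x => Real.exp (-a * (x + z)) • f x) (Ioi (0:ℝ)) := by
  have : (fun x => Real.exp (-a * (x + z)) • f x)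
      = fun x => Real.exp (-a * z) • (Real.exp (-a * x) • f x) := by
    funext x; rw [smul_smul, ← Real.exp_add]; ring_nf
  rw [this]
  exact (intK hcf hb hβ0 ha).smul (Real.exp (-a * z))

lemma G_eq {z : ℝ} (hz : 0 ≤ z) :
    G a f z = ∫ x in Ioi z, Real.exp (-a * x) • f x := by
  have hu : Ioc (0:ℝ) z ∪ Ioi z = Ioi 0 := Ioc_union_Ioi_eq_Ioi hz
  have hdisj : Disjoint (Ioc (0:ℝ) z) (Ioi z) := Ioc_disjoint_Ioi le_rfl
  have hsplit : K a f = (∫ x in Ioc (0:ℝ) z, Real.exp (-a * x) • f x)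
      + ∫ x in Ioi z, Real.exp (-a * x) • f x := by
    rw [K, ← hu]
    exact setIntegral_union hdisj measurableSet_Ioi
      ((intK hcf hb hβ0 ha).mono_set Ioc_subset_Ioi_self) (intKz hcf hb hβ0 ha hz)
  rw [G, hsplit, intervalIntegral.integral_of_le hz]
  ring

end basic

end LIA
end LIAaux

open Real MeasureTheory Set Filter Topology intervalIntegral

noncomputable section LIAaux2
namespace LIA

variable {β M a : ℝ} {f : ℝ → ℂ}

def psi (a : ℝ) (f : ℝ → ℂ) (z : ℝ) : ℂ :=
  (-(1/(2*a)) : ℝ) • (Real.exp (-a*z) • F a f z + Real.exp (a*z) • G a f z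
    - Real.exp (-a*z) • K a f)

def psi' (a : ℝ) (f : ℝ → ℂ) (z : ℝ) : ℂ :=
  (-(1/2) : ℝ) • ((-(Real.exp (-a*z))) • F a f z + Real.exp (a*z) • G a f z
    + Real.exp (-a*z) • K a f)

def chi (a : ℝ) (f : ℝ → ℂ) (z : ℝ) : ℂ :=
  (-(1/(2*a)) : ℝ) • ((Real.exp (a*z) - Real.exp (-a*z)) • K a f)

section basic
variable (hcf : Continuous f)
  (hb : ∀ x, 0 ≤ x → ‖f x‖ ≤ M * Real.exp (-β * x))
  (hβ0 : 0 < β) (ha : 0 < a)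

include hcf hb hβ0 ha

lemma split_ker {z : ℝ} (hz : 0 ≤ z) :
    ∫ x in Ioi (0:ℝ), Real.exp (-a * |x - z|) • f x
      = Real.exp (-a*z) • F a f z + Real.exp (a*z) • G a f z := by
  have hu : Ioc (0:ℝ) z ∪ Ioi z = Ioi 0 := Ioc_union_Ioi_eq_Ioi hz
  rw [← hu, setIntegral_union (Ioc_disjoint_Ioi le_rfl) measurableSet_Ioi
    ((intKer hcf hb hβ0 ha z).mono_set (by rw [← hu]; exact subset_union_left))
    ((intKer hcf hb hβ0 ha z).mono_set (by rw [← hu]; exact subset_union_right))]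
  have h1 : ∫ x in Ioc (0:ℝ) z, Real.exp (-a * |x - z|) • f x
      = Real.exp (-a*z) • F a f z := by
    rw [show Real.exp (-a*z) • F a f z
        = ∫ x in Ioc (0:ℝ) z, Real.exp (-a*z) • (Real.exp (a * x) • f x) by
      rw [MeasureTheory.integral_smul, F, intervalIntegral.integral_of_le hz]]
    refine setIntegral_congr_fun measurableSet_Ioc (fun x hx => ?_)
    rw [smul_smul, ← Real.exp_add, abs_of_nonpos (by linarith [hx.2] : x - z ≤ 0)]
    ring_nf
  have h2 : ∫ x in Ioi z, Real.exp (-a * |x - z|) • f x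
      = Real.exp (a*z) • G a f z := by
    rw [G_eq hcf hb hβ0 ha hz,
      show Real.exp (a*z) • ∫ x in Ioi z, Real.exp (-a * x) • f x
        = ∫ x in Ioi z, Real.exp (a*z) • (Real.exp (-a * x) • f x) from (MeasureTheory.integral_smul _ _).symm]
    refine setIntegral_congr_fun measurableSet_Ioi (fun x hx => ?_)
    rw [smul_smul, ← Real.exp_add, abs_of_nonneg (by linarith [hx.out] : (0:ℝ) ≤ x - z)]
    ring_nf
  rw [h1, h2]

lemma split_ker2 (z : ℝ) :
    ∫ x in Ioi (0:ℝ), Real.exp (-a * (x + z)) • f x = Real.exp (-a*z) • K a f := by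
  rw [K, show Real.exp (-a*z) • ∫ x in Ioi (0:ℝ), Real.exp (-a * x) • f x
      = ∫ x in Ioi (0:ℝ), Real.exp (-a*z) • (Real.exp (-a * x) • f x) from
      (MeasureTheory.integral_smul _ _).symm]
  refine setIntegral_congr_fun measurableSet_Ioi (fun x hx => ?_)
  rw [smul_smul, ← Real.exp_add]
  ring_nf

lemma phi_eq_psi {z : ℝ} (hz : 0 ≤ z) :
    ((-(1 / (2 * a)) : ℝ) •
      ∫ x in Ioi (0:ℝ),
        (Real.exp (-a * |x - z|) - Real.exp (-a * (x + z))) • f x) = psi a f z := by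
  have hint : ∫ x in Ioi (0:ℝ), (Real.exp (-a * |x - z|) - Real.exp (-a * (x + z))) • f x
      = (∫ x in Ioi (0:ℝ), Real.exp (-a * |x - z|) • f x)
        - ∫ x in Ioi (0:ℝ), Real.exp (-a * (x + z)) • f x := by
    rw [← integral_sub (intKer hcf hb hβ0 ha z) (intKer2 hcf hb hβ0 ha z)]
    refine setIntegral_congr_fun measurableSet_Ioi (fun x _ => ?_)
    rw [sub_smul]
  rw [hint, split_ker hcf hb hβ0 ha hz, split_ker2 hcf hb hβ0 ha z, psi]

lemma phi_eq_chi {z : ℝ} (hz : z ≤ 0) :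
    ((-(1 / (2 * a)) : ℝ) •
      ∫ x in Ioi (0:ℝ),
        (Real.exp (-a * |x - z|) - Real.exp (-a * (x + z))) • f x) = chi a f z := by
  have : ∫ x in Ioi (0:ℝ), (Real.exp (-a * |x - z|) - Real.exp (-a * (x + z))) • f x
      = (Real.exp (a*z) - Real.exp (-a*z)) • K a f := by
    rw [K, show (Real.exp (a*z) - Real.exp (-a*z)) • ∫ x in Ioi (0:ℝ), Real.exp (-a * x) • f x
        = ∫ x in Ioi (0:ℝ), (Real.exp (a*z) - Real.exp (-a*z)) • (Real.exp (-a * x) • f x) from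
        (MeasureTheory.integral_smul _ _).symm]
    refine setIntegral_congr_fun measurableSet_Ioi (fun x hx => ?_)
    rw [abs_of_nonneg (by linarith [hx.out] : (0:ℝ) ≤ x - z), smul_smul]
    congr 1
    rw [sub_mul, ← Real.exp_add, ← Real.exp_add]
    ring_nf
  rw [this, chi]

end basic
end LIA
end LIAaux2

open Real MeasureTheory Set Filter Topology intervalIntegral

namespace LIA
variable {β M a : ℝ} {f : ℝ → ℂ}

lemma hexp (c z : ℝ) : HasDerivAt (fun z => Real.exp (c*z)) (c * Real.exp (c*z)) z := by
  have : HasDerivAt (fun z => Real.exp (c*z)) (Real.exp (c*z) * (c*1)) z :=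
    ((hasDerivAt_id z).const_mul c).exp
  simpa [mul_comm] using this

section basic
variable (hcf : Continuous f)
  (hb : ∀ x, 0 ≤ x → ‖f x‖ ≤ M * Real.exp (-β * x))
  (hβ0 : 0 < β) (ha : 0 < a)

include hcf in
lemma hF (z : ℝ) : HasDerivAt (F a f) (Real.exp (a*z) • f z) z := by
  have hcont : Continuous (fun x => Real.exp (a * x) • f x) :=
    by fun_prop
  exact (hcont.integral_hasStrictDerivAt 0 z).hasDerivAt

include hcf in
lemma hG (z : ℝ) : HasDerivAt (G a f) (-(Real.exp (-a*z) • f z)) z := by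
  have hcont : Continuous (fun x => Real.exp (-a * x) • f x) :=
    by fun_prop
  exact ((hcont.integral_hasStrictDerivAt 0 z).hasDerivAt).const_sub (K a f)

include hcf ha in
lemma hpsi (z : ℝ) : HasDerivAt (psi a f) (psi' a f z) z := by
  have t1 := (hexp (-a) z).smul (hF (a := a) hcf z)
  have t2 := (hexp a z).smul (hG (a := a) hcf z)
  have t3 := (hexp (-a) z).smul_const (K a f)
  have hsum := (((t1.add t2).sub t3).const_smul (-(1/(2*a)) : ℝ))
  have : ∀ w, psi a f w = (-(1/(2*a)) : ℝ) •
      ((fun w => Real.exp (-a*w) • F a f w) w + (fun w => Real.exp (a*w) • G a f w) w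
        - (fun w => Real.exp (-a*w) • K a f) w) := fun w => rfl
  refine HasDerivAt.congr_deriv (hsum.congr_of_eventuallyEq ?_) ?_
  · filter_upwards with w; rfl
  · -- derivative value identity
    rw [psi']
    simp only [Complex.real_smul]
    push_cast
    simp only [neg_mul, Complex.exp_neg]
    have h3 : (a : ℂ) ≠ 0 := by
      simpa using ne_of_gt ha
    field_simp [Complex.exp_ne_zero]
    ring
include hcf ha in
lemma hpsi' (z : ℝ) : HasDerivAt (psi' a f) (f z + (a^2 : ℝ) • psi a f z) z := by
  have t1 := ((hexp (-a) z).neg.smul (hF (a := a) hcf z))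
  have t2 := (hexp a z).smul (hG (a := a) hcf z)
  have t3 := (hexp (-a) z).smul_const (K a f)
  have hsum := (((t1.add t2).add t3).const_smul (-(1/2) : ℝ))
  refine HasDerivAt.congr_deriv (hsum.congr_of_eventuallyEq ?_) ?_
  · filter_upwards with w; rfl
  · rw [psi]
    simp only [Complex.real_smul, Pi.neg_apply]
    push_cast
    simp only [neg_mul, Complex.exp_neg]
    have h3 : (a : ℂ) ≠ 0 := by simpa using ne_of_gt ha
    field_simp [Complex.exp_ne_zero]
    ring

include ha in
lemma hchi (z : ℝ) : HasDerivAt (chi a f)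
    ((-(1/2) : ℝ) • ((Real.exp (a*z) + Real.exp (-a*z)) • K a f)) z := by
  have t := (((hexp a z).sub (hexp (-a) z)).smul_const (K a f)).const_smul (-(1/(2*a)) : ℝ)
  refine HasDerivAt.congr_deriv (t.congr_of_eventuallyEq ?_) ?_
  · filter_upwards with w; rfl
  · simp only [Complex.real_smul]
    push_cast
    have h3 : (a : ℂ) ≠ 0 := by simpa using ne_of_gt ha
    field_simp
    ring

lemma F_zero : F a f 0 = 0 := intervalIntegral.integral_same

lemma G_zero : G a f 0 = K a f := by
  rw [G, intervalIntegral.integral_same, sub_zero]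

lemma psi_zero : psi a f 0 = 0 := by
  rw [psi, F_zero, G_zero]
  norm_num

lemma psi'_zero : psi' a f 0 = -(K a f) := by
  rw [psi', F_zero, G_zero]
  norm_num
  ring

end basic
end LIA

open Real MeasureTheory Set Filter Topology intervalIntegral

namespace LIA
variable {β M a : ℝ} {f : ℝ → ℂ}

section bounds
variable (hcf : Continuous f)
  (hb : ∀ x, 0 ≤ x → ‖f x‖ ≤ M * Real.exp (-β * x))
  (hβ0 : 0 < β) (ha1 : 1 ≤ a) (hβ : β < 1/2) (hM0 : 0 ≤ M)

include hcf hb hβ0 ha1 hβ hM0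

lemma ha : 0 < a := lt_of_lt_of_le one_pos ha1
lemma hβa : β < a := lt_of_lt_of_le (hβ.trans_le (by norm_num)) ha1

lemma normKz {z : ℝ} (hz : 0 ≤ z) :
    ‖∫ x in Ioi z, Real.exp (-a * x) • f x‖ ≤ M * Real.exp (-(a+β) * z) / (a+β) := by
  have ha0 : 0 < a := ha hcf hb hβ0 ha1 hβ hM0
  have hint := intKz hcf hb hβ0 ha0 hz
  have h1 : ‖∫ x in Ioi z, Real.exp (-a * x) • f x‖
      ≤ ∫ x in Ioi z, ‖Real.exp (-a * x) • f x‖ := norm_integral_le_integral_norm _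
  have h2 : ∫ x in Ioi z, ‖Real.exp (-a * x) • f x‖
      ≤ ∫ x in Ioi z, M * Real.exp (-((a+β) * x)) := by
    refine setIntegral_mono_on hint.norm ?_ measurableSet_Ioi (fun x hx => ?_)
    · have : IntegrableOn (fun x => M * Real.exp (-(a+β) * x)) (Ioi z) :=
        (exp_neg_integrableOn_Ioi z (by positivity)).const_mul M
      exact this.congr_fun (fun x _ => by simp only [neg_mul]) measurableSet_Ioi
    · have hx0 : (0:ℝ) ≤ x := le_trans hz (le_of_lt hx)
      rw [norm_smul, Real.norm_eq_abs, abs_of_pos (Real.exp_pos _)]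
      calc Real.exp (-a * x) * ‖f x‖
          ≤ Real.exp (-a * x) * (M * Real.exp (-β * x)) :=
            mul_le_mul_of_nonneg_left (hb x hx0) (Real.exp_pos _).le
        _ = M * Real.exp (-((a+β) * x)) := by
            rw [mul_comm, mul_assoc, ← Real.exp_add]; ring_nf
  have h3 : ∫ x in Ioi z, M * Real.exp (-((a+β) * x))
      = M * Real.exp (-(a+β) * z) / (a+β) := by
    rw [MeasureTheory.integral_const_mul, int_exp_Ioi (by positivity) z, neg_mul]
    ring
  linarith

lemma normK : ‖K a f‖ ≤ M / (a+β) := by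
  have := normKz hcf hb hβ0 ha1 hβ hM0 (le_refl (0:ℝ))
  simpa [K] using this

lemma normG {z : ℝ} (hz : 0 ≤ z) :
    ‖G a f z‖ ≤ M * Real.exp (-(a+β) * z) / (a+β) := by
  rw [G_eq hcf hb hβ0 (ha hcf hb hβ0 ha1 hβ hM0) hz]
  exact normKz hcf hb hβ0 ha1 hβ hM0 hz

lemma normF {z : ℝ} (hz : 0 ≤ z) :
    ‖F a f z‖ ≤ M * Real.exp ((a-β) * z) / (a-β) := by
  have hab : 0 < a - β := sub_pos.2 (hβa hcf hb hβ0 ha1 hβ hM0)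
  have h1 : ‖F a f z‖ ≤ ∫ x in (0:ℝ)..z, ‖Real.exp (a * x) • f x‖ :=
    intervalIntegral.norm_integral_le_integral_norm hz
  have h2 : ∫ x in (0:ℝ)..z, ‖Real.exp (a * x) • f x‖
      ≤ ∫ x in (0:ℝ)..z, M * Real.exp ((a-β) * x) := by
    refine intervalIntegral.integral_mono_on hz ?_ ?_ (fun x hx => ?_)
    · exact Continuous.intervalIntegrable (by continuity) _ _
    · exact Continuous.intervalIntegrable (by continuity) _ _
    · rw [norm_smul, Real.norm_eq_abs, abs_of_pos (Real.exp_pos _)]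
      calc Real.exp (a * x) * ‖f x‖
          ≤ Real.exp (a * x) * (M * Real.exp (-β * x)) :=
            mul_le_mul_of_nonneg_left (hb x hx.1) (Real.exp_pos _).le
        _ = M * Real.exp ((a-β) * x) := by
            rw [mul_comm, mul_assoc, ← Real.exp_add]; ring_nf
  have h3 : ∫ x in (0:ℝ)..z, M * Real.exp ((a-β) * x)
      = M * ((Real.exp ((a-β)*z) - 1) / (a-β)) := by
    rw [intervalIntegral.integral_const_mul, int_exp_interval _ (ne_of_gt hab)]
  have h4 : M * ((Real.exp ((a-β)*z) - 1) / (a-β)) ≤ M * Real.exp ((a-β) * z) / (a-β) := by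
    rw [mul_div_assoc]
    gcongr
    linarith [Real.exp_pos ((a-β)*z)]
  linarith

end bounds
end LIA

open Real MeasureTheory Set Filter Topology intervalIntegral

namespace LIA
variable {β M a : ℝ} {f : ℝ → ℂ}

section wbounds
variable (hcf : Continuous f)
  (hb : ∀ x, 0 ≤ x → ‖f x‖ ≤ M * Real.exp (-β * x))
  (hβ0 : 0 < β) (ha1 : 1 ≤ a) (hβ : β < 1/2) (hM0 : 0 ≤ M)

include hcf hb hβ0 ha1 hβ hM0

lemma keybound {z : ℝ} (hz : 0 ≤ z) :
    Real.exp (-a*z) * ‖F a f z‖ + Real.exp (a*z) * ‖G a f z‖ + Real.exp (-a*z) * ‖K a f‖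
      ≤ 3 * (M * Real.exp (-β*z) / (a-β)) := by
  have ha0 : 0 < a := ha hcf hb hβ0 ha1 hβ hM0
  have hβa' : β < a := hβa hcf hb hβ0 ha1 hβ hM0
  have hab : 0 < a - β := sub_pos.2 hβa'
  have habp : 0 < a + β := by linarith
  have k1 : Real.exp (-a*z) * ‖F a f z‖ ≤ M * Real.exp (-β*z) / (a-β) := by
    calc Real.exp (-a*z) * ‖F a f z‖
        ≤ Real.exp (-a*z) * (M * Real.exp ((a-β) * z) / (a-β)) :=
          mul_le_mul_of_nonneg_left (normF hcf hb hβ0 ha1 hβ hM0 hz) (Real.exp_pos _).le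
      _ = M * (Real.exp (-a*z) * Real.exp ((a-β)*z)) / (a-β) := by ring
      _ = M * Real.exp (-β*z) / (a-β) := by rw [← Real.exp_add]; ring_nf
  have k2 : Real.exp (a*z) * ‖G a f z‖ ≤ M * Real.exp (-β*z) / (a-β) := by
    calc Real.exp (a*z) * ‖G a f z‖
        ≤ Real.exp (a*z) * (M * Real.exp (-(a+β) * z) / (a+β)) :=
          mul_le_mul_of_nonneg_left (normG hcf hb hβ0 ha1 hβ hM0 hz) (Real.exp_pos _).le
      _ = M * (Real.exp (a*z) * Real.exp (-(a+β)*z)) / (a+β) := by ring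
      _ = M * Real.exp (-β*z) / (a+β) := by rw [← Real.exp_add]; ring_nf
      _ ≤ M * Real.exp (-β*z) / (a-β) := div_le_div_of_nonneg_left (by positivity) hab (by linarith)
  have k3 : Real.exp (-a*z) * ‖K a f‖ ≤ M * Real.exp (-β*z) / (a-β) := by
    have e1 : Real.exp (-a*z) ≤ Real.exp (-β*z) := by
      apply Real.exp_le_exp.2; nlinarith
    calc Real.exp (-a*z) * ‖K a f‖
        ≤ Real.exp (-β*z) * (M / (a+β)) :=
          mul_le_mul e1 (normK hcf hb hβ0 ha1 hβ hM0) (norm_nonneg _) (Real.exp_pos _).le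
      _ = M * Real.exp (-β*z) / (a+β) := by ring
      _ ≤ M * Real.exp (-β*z) / (a-β) := div_le_div_of_nonneg_left (by positivity) hab (by linarith)
  linarith

lemma wpsi {z : ℝ} (hz : 0 ≤ z) :
    ‖psi a f z‖ * Real.exp (β*z) ≤ 3 * M / a^2 := by
  have ha0 : 0 < a := ha hcf hb hβ0 ha1 hβ hM0
  have hab : 0 < a - β := sub_pos.2 (hβa hcf hb hβ0 ha1 hβ hM0)
  have h0 : ‖psi a f z‖ ≤ (1/(2*a)) *
      (Real.exp (-a*z) * ‖F a f z‖ + Real.exp (a*z) * ‖G a f z‖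
        + Real.exp (-a*z) * ‖K a f‖) := by
    rw [psi, norm_smul, Real.norm_eq_abs, abs_neg, abs_of_pos (by positivity : (0:ℝ) < 1/(2*a))]
    refine mul_le_mul_of_nonneg_left ?_ (by positivity)
    calc ‖Real.exp (-a*z) • F a f z + Real.exp (a*z) • G a f z - Real.exp (-a*z) • K a f‖
        ≤ ‖Real.exp (-a*z) • F a f z + Real.exp (a*z) • G a f z‖ + ‖Real.exp (-a*z) • K a f‖ :=
          norm_sub_le _ _
      _ ≤ ‖Real.exp (-a*z) • F a f z‖ + ‖Real.exp (a*z) • G a f z‖ + ‖Real.exp (-a*z) • K a f‖ := by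
          linarith [norm_add_le (Real.exp (-a*z) • F a f z) (Real.exp (a*z) • G a f z)]
      _ = Real.exp (-a*z) * ‖F a f z‖ + Real.exp (a*z) * ‖G a f z‖
          + Real.exp (-a*z) * ‖K a f‖ := by
          simp only [norm_smul, Real.norm_eq_abs, Real.abs_exp, abs_neg]
  have h1 : ‖psi a f z‖ ≤ (1/(2*a)) * (3 * (M * Real.exp (-β*z) / (a-β))) :=
    le_trans h0 (mul_le_mul_of_nonneg_left (keybound hcf hb hβ0 ha1 hβ hM0 hz) (by positivity))
  have h2 : ‖psi a f z‖ * Real.exp (β*z)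
      ≤ ((1/(2*a)) * (3 * (M * Real.exp (-β*z) / (a-β)))) * Real.exp (β*z) :=
    mul_le_mul_of_nonneg_right h1 (Real.exp_pos _).le
  have e0 : Real.exp (-β*z) * Real.exp (β*z) = 1 := by
    rw [← Real.exp_add, show -β*z + β*z = 0 by ring, Real.exp_zero]
  have h3 : ((1/(2*a)) * (3 * (M * Real.exp (-β*z) / (a-β)))) * Real.exp (β*z)
      = 3 * M / (2*a*(a-β)) := by
    rw [show ((1/(2*a)) * (3 * (M * Real.exp (-β*z) / (a-β)))) * Real.exp (β*z)
      = (3*M) / (2*a*(a-β)) * (Real.exp (-β*z) * Real.exp (β*z)) by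
        field_simp, e0, mul_one]
  have h4 : 3 * M / (2*a*(a-β)) ≤ 3 * M / a^2 :=
    div_le_div_of_nonneg_left (by positivity) (by positivity) (by nlinarith)
  linarith

lemma wpsi' {z : ℝ} (hz : 0 ≤ z) :
    ‖psi' a f z‖ * Real.exp (β*z) ≤ 3 * M / a := by
  have ha0 : 0 < a := ha hcf hb hβ0 ha1 hβ hM0
  have hab : 0 < a - β := sub_pos.2 (hβa hcf hb hβ0 ha1 hβ hM0)
  have h0 : ‖psi' a f z‖ ≤ (1/2) *
      (Real.exp (-a*z) * ‖F a f z‖ + Real.exp (a*z) * ‖G a f z‖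
        + Real.exp (-a*z) * ‖K a f‖) := by
    rw [psi', norm_smul, Real.norm_eq_abs, abs_neg, abs_of_pos (by norm_num : (0:ℝ) < 1/2)]
    refine mul_le_mul_of_nonneg_left ?_ (by norm_num)
    calc ‖(-(Real.exp (-a*z))) • F a f z + Real.exp (a*z) • G a f z + Real.exp (-a*z) • K a f‖
        ≤ ‖(-(Real.exp (-a*z))) • F a f z + Real.exp (a*z) • G a f z‖
          + ‖Real.exp (-a*z) • K a f‖ := norm_add_le _ _
      _ ≤ ‖(-(Real.exp (-a*z))) • F a f z‖ + ‖Real.exp (a*z) • G a f z‖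
          + ‖Real.exp (-a*z) • K a f‖ := by
          linarith [norm_add_le ((-(Real.exp (-a*z))) • F a f z) (Real.exp (a*z) • G a f z)]
      _ = Real.exp (-a*z) * ‖F a f z‖ + Real.exp (a*z) * ‖G a f z‖
          + Real.exp (-a*z) * ‖K a f‖ := by
          simp only [norm_smul, Real.norm_eq_abs, Real.abs_exp, abs_neg]
  have h1 : ‖psi' a f z‖ ≤ (1/2) * (3 * (M * Real.exp (-β*z) / (a-β))) :=
    le_trans h0 (mul_le_mul_of_nonneg_left (keybound hcf hb hβ0 ha1 hβ hM0 hz) (by norm_num))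
  have h2 : ‖psi' a f z‖ * Real.exp (β*z)
      ≤ ((1/2) * (3 * (M * Real.exp (-β*z) / (a-β)))) * Real.exp (β*z) :=
    mul_le_mul_of_nonneg_right h1 (Real.exp_pos _).le
  have e0 : Real.exp (-β*z) * Real.exp (β*z) = 1 := by
    rw [← Real.exp_add, show -β*z + β*z = 0 by ring, Real.exp_zero]
  have h3 : ((1/2) * (3 * (M * Real.exp (-β*z) / (a-β)))) * Real.exp (β*z)
      = 3 * M / (2*(a-β)) := by
    rw [show ((1/2) * (3 * (M * Real.exp (-β*z) / (a-β)))) * Real.exp (β*z)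
      = (3*M) / (2*(a-β)) * (Real.exp (-β*z) * Real.exp (β*z)) by
        field_simp, e0, mul_one]
  have h4 : 3 * M / (2*(a-β)) ≤ 3 * M / a :=
    div_le_div_of_nonneg_left (by positivity) (by positivity) (by nlinarith)
  linarith

lemma wpsi'' {z : ℝ} (hz : 0 ≤ z) :
    ‖f z + (a^2 : ℝ) • psi a f z‖ * Real.exp (β*z) ≤ 4 * M := by
  have ha0 : 0 < a := ha hcf hb hβ0 ha1 hβ hM0
  have h0 : ‖f z + (a^2 : ℝ) • psi a f z‖ ≤ ‖f z‖ + a^2 * ‖psi a f z‖ := by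
    refine (norm_add_le _ _).trans ?_
    rw [norm_smul, Real.norm_eq_abs, abs_of_pos (by positivity : (0:ℝ) < a^2)]
  have h1 : ‖f z‖ * Real.exp (β*z) ≤ M := by
    have := mul_le_mul_of_nonneg_right (hb z hz) (Real.exp_pos (β*z)).le
    calc ‖f z‖ * Real.exp (β*z) = ‖f z‖ * Real.exp (β*z) := by
          rfl
      _ ≤ (M * Real.exp (-β*z)) * Real.exp (β*z) := this
      _ = M * (Real.exp (-β*z) * Real.exp (β*z)) := by ring
      _ = M := by rw [← Real.exp_add]; norm_num
  have h2 := wpsi hcf hb hβ0 ha1 hβ hM0 hz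
  have h3 : a^2 * (‖psi a f z‖ * Real.exp (β*z)) ≤ a^2 * (3*M/a^2) :=
    mul_le_mul_of_nonneg_left h2 (by positivity)
  have h4 : a^2 * (3*M/a^2) = 3*M := by field_simp
  nlinarith [Real.exp_pos (β*z), norm_nonneg (f z), norm_nonneg (psi a f z)]

end wbounds
end LIA

end LIAproofaux

/-- Inversion of `∂_z² - α²` on the half line with Dirichlet condition, in the
spaces `𝒜^β` with no boundary layer: for `0 < β < 1/2` there is a constant `C`
independent of the nonzero integer `α` such that, for continuous `f` with
`‖f‖_β < ∞`, the explicit solution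
`φ(z) = -(1/(2|α|)) ∫₀^∞ (e^{-|α||x-z|} - e^{-|α|(x+z)}) f(x) dx`
satisfies `φ(0) = 0`, solves `φ'' - α²φ = f` on `(0,∞)`, and
`α²‖φ‖_β + |α|‖φ'‖_β + ‖φ''‖_β ≤ C‖f‖_β`. -/
theorem laplace_inverse_Abeta (β : ℝ) (hβ0 : 0 < β) (hβ : β < 1/2) :
    ∃ C : ℝ, 0 < C ∧ ∀ (α : ℤ), α ≠ 0 → ∀ f : ℝ → ℂ, Continuous f →
      expNorm β f < ⊤ →
      ∀ φ : ℝ → ℂ,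
        (φ = fun z => -(1 / (2 * |(α : ℝ)|) : ℝ) •
          ∫ x in Set.Ioi (0 : ℝ),
            (Real.exp (-|(α : ℝ)| * |x - z|) - Real.exp (-|(α : ℝ)| * (x + z))) • f x) →
        φ 0 = 0 ∧
        (∀ z ∈ Set.Ioi (0 : ℝ), deriv (deriv φ) z - (α : ℂ)^2 * φ z = f z) ∧
        ENNReal.ofReal ((α : ℝ)^2) * expNorm β φ
          + ENNReal.ofReal |(α : ℝ)| * expNorm β (deriv φ)
          + expNorm β (deriv (deriv φ))
          ≤ ENNReal.ofReal C * expNorm β f := by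
  refine ⟨10, by norm_num, ?_⟩
  intro α hα f hcf hfin φ hφeq
  set a : ℝ := |(α : ℝ)| with hadef
  have ha1 : (1:ℝ) ≤ a := by
    rw [hadef, ← Int.cast_abs]
    exact_mod_cast Int.one_le_abs hα
  have ha0 : (0:ℝ) < a := lt_of_lt_of_le one_pos ha1
  set M : ℝ := (expNorm β f).toReal with hMdef
  have hM0 : 0 ≤ M := ENNReal.toReal_nonneg
  have hEf : expNorm β f = ENNReal.ofReal M := (ENNReal.ofReal_toReal hfin.ne).symm
  have hb : ∀ x, 0 ≤ x → ‖f x‖ ≤ M * Real.exp (-β * x) := by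
    intro x hx
    have h1 : ENNReal.ofReal (‖f x‖ * Real.exp (β * x)) ≤ expNorm β f :=
      le_iSup₂ (f := fun z (_ : z ∈ Set.Ici (0:ℝ)) =>
        ENNReal.ofReal (‖f z‖ * Real.exp (β * z))) x hx
    rw [hEf] at h1
    have h2 : ‖f x‖ * Real.exp (β * x) ≤ M :=
      (ENNReal.ofReal_le_ofReal_iff hM0).1 h1
    have h3 := mul_le_mul_of_nonneg_right h2 (Real.exp_pos (-β * x)).le
    calc ‖f x‖
        = ‖f x‖ * (Real.exp (β * x) * Real.exp (-β * x)) := by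
          rw [← Real.exp_add, show β*x + -β*x = 0 by ring, Real.exp_zero, mul_one]
      _ = ‖f x‖ * Real.exp (β * x) * Real.exp (-β * x) := by ring
      _ ≤ M * Real.exp (-β * x) := h3
  -- representation
  have hphi_psi : ∀ z, 0 ≤ z → φ z = LIA.psi a f z := by
    intro z hz
    rw [hφeq]
    exact LIA.phi_eq_psi hcf hb hβ0 ha0 hz
  have hphi_chi : ∀ z, z ≤ 0 → φ z = LIA.chi a f z := by
    intro z hz
    rw [hφeq]
    exact LIA.phi_eq_chi hcf hb hβ0 ha0 hz
  have hψd : ∀ z, HasDerivAt (LIA.psi a f) (LIA.psi' a f z) z := LIA.hpsi hcf ha0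
  have hψ'd : ∀ z, HasDerivAt (LIA.psi' a f) (f z + (a^2 : ℝ) • LIA.psi a f z) z :=
    LIA.hpsi' hcf ha0
  -- derivative at 0
  have hφ0' : HasDerivAt φ (LIA.psi' a f 0) 0 := by
    have h1 : HasDerivWithinAt φ (LIA.psi' a f 0) (Set.Ici 0) 0 :=
      ((hψd 0).hasDerivWithinAt).congr (fun y hy => hphi_psi y hy) (hphi_psi 0 le_rfl)
    have hval : ((-(1/2) : ℝ) • (Real.exp (a*0) + Real.exp (-a*0)) • LIA.K a f)
        = LIA.psi' a f 0 := by
      rw [LIA.psi'_zero]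
      norm_num
      ring
    have h2 : HasDerivWithinAt φ (LIA.psi' a f 0) (Set.Iic 0) 0 :=
      (((LIA.hchi ha0 0).congr_deriv hval).hasDerivWithinAt).congr
        (fun y hy => hphi_chi y hy) (hphi_chi 0 le_rfl)
    have h3 := h2.union h1
    rw [Set.Iic_union_Ici] at h3
    exact hasDerivWithinAt_univ.1 h3
  have hderiv_phi : ∀ z, 0 ≤ z → deriv φ z = LIA.psi' a f z := by
    intro z hz
    rcases eq_or_lt_of_le hz with h | h
    · rw [← h]; exact hφ0'.deriv
    · have heq : φ =ᶠ[nhds z] LIA.psi a f := by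
        filter_upwards [Ioi_mem_nhds h] with y hy
        exact hphi_psi y hy.le
      exact ((hψd z).congr_of_eventuallyEq heq).deriv
  have hφd2 : ∀ z, 0 < z → deriv (deriv φ) z = f z + (a^2 : ℝ) • LIA.psi a f z := by
    intro z hz
    have heq : deriv φ =ᶠ[nhds z] LIA.psi' a f := by
      filter_upwards [Ioi_mem_nhds hz] with y hy
      exact hderiv_phi y hy.le
    exact ((hψ'd z).congr_of_eventuallyEq heq).deriv
  have hsq : ((a^2 : ℝ) : ℂ) = (α : ℂ)^2 := by
    rw [hadef, sq_abs]; push_cast; ring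
  refine ⟨?_, ?_, ?_⟩
  · rw [hphi_psi 0 le_rfl, LIA.psi_zero]
  · intro z hz
    rw [hφd2 z hz, hphi_psi z (le_of_lt hz), Complex.real_smul, hsq]
    ring
  · -- norm estimates
    have hEφ : expNorm β φ ≤ ENNReal.ofReal (3 * M / a^2) := by
      refine iSup₂_le fun z hz => ENNReal.ofReal_le_ofReal ?_
      rw [hphi_psi z hz]
      simpa using LIA.wpsi hcf hb hβ0 ha1 hβ hM0 hz
    have hEφ' : expNorm β (deriv φ) ≤ ENNReal.ofReal (3 * M / a) := by
      refine iSup₂_le fun z hz => ENNReal.ofReal_le_ofReal ?_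
      rw [hderiv_phi z hz]
      simpa using LIA.wpsi' hcf hb hβ0 ha1 hβ hM0 hz
    have hEφ'' : expNorm β (deriv (deriv φ)) ≤ ENNReal.ofReal (4 * M) := by
      refine iSup₂_le fun z hz => ENNReal.ofReal_le_ofReal ?_
      rcases eq_or_lt_of_le (Set.mem_Ici.mp hz : (0:ℝ) ≤ z) with h | h
      · -- z = 0
        subst h
        by_cases hd : DifferentiableAt ℝ (deriv φ) 0
        · have hu : UniqueDiffWithinAt ℝ (Set.Ici (0:ℝ)) 0 := uniqueDiffOn_Ici 0 0 Set.self_mem_Ici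
          have hD1 : HasDerivWithinAt (deriv φ) (deriv (deriv φ) 0) (Set.Ici 0) 0 :=
            hd.hasDerivAt.hasDerivWithinAt
          have hD2 : HasDerivWithinAt (deriv φ) (f 0 + (a^2 : ℝ) • LIA.psi a f 0) (Set.Ici 0) 0 :=
            ((hψ'd 0).hasDerivWithinAt).congr (fun y hy => hderiv_phi y hy)
              (hderiv_phi 0 le_rfl)
          have hkey : deriv (deriv φ) 0 = f 0 + (a^2 : ℝ) • LIA.psi a f 0 := by
            rw [← hD1.derivWithin hu, hD2.derivWithin hu]
          rw [hkey]
          simpa using LIA.wpsi'' hcf hb hβ0 ha1 hβ hM0 le_rfl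
        · rw [deriv_zero_of_not_differentiableAt hd]
          simp
          positivity
      · rw [hφd2 z h]
        simpa using LIA.wpsi'' hcf hb hβ0 ha1 hβ hM0 (le_of_lt h)
    have e1 : ENNReal.ofReal ((α:ℝ)^2) * expNorm β φ ≤ ENNReal.ofReal (3 * M) := by
      have : ENNReal.ofReal ((α:ℝ)^2) * expNorm β φ
          ≤ ENNReal.ofReal (a^2) * ENNReal.ofReal (3 * M / a^2) := by
        rw [show ((α:ℝ)^2) = a^2 by rw [hadef, sq_abs]]
        exact mul_le_mul_right hEφ _
      refine this.trans ?_
      rw [← ENNReal.ofReal_mul (by positivity)]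
      apply ENNReal.ofReal_le_ofReal
      rw [mul_div_cancel₀]
      positivity
    have e2 : ENNReal.ofReal a * expNorm β (deriv φ) ≤ ENNReal.ofReal (3 * M) := by
      refine (mul_le_mul_right hEφ' _).trans ?_
      rw [← ENNReal.ofReal_mul ha0.le]
      apply ENNReal.ofReal_le_ofReal
      rw [mul_div_cancel₀]
      exact ne_of_gt ha0
    calc ENNReal.ofReal ((α:ℝ)^2) * expNorm β φ + ENNReal.ofReal a * expNorm β (deriv φ)
          + expNorm β (deriv (deriv φ))
        ≤ ENNReal.ofReal (3*M) + ENNReal.ofReal (3*M) + ENNReal.ofReal (4*M) :=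
          add_le_add (add_le_add e1 e2) hEφ''
      _ = ENNReal.ofReal (10 * M) := by
          rw [← ENNReal.ofReal_add (by positivity) (by positivity),
            ← ENNReal.ofReal_add (by positivity) (by positivity)]
          congr 1
          ring
      _ = ENNReal.ofReal 10 * expNorm β f := by
          rw [hEf, ← ENNReal.ofReal_mul (by norm_num)]
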